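/- arXiv:2506.13311 — 3 statements merged into one kernel-verified Lean document; each statement's English description precedes it below -/
import Mathlib

section
/- Let G(x,y) = -(1/(2π))xy - (1/2)|x-y| + π/2 be the Green's function on [-π,π], let b ∈ (0,π), and let I = [b,π]. For all x, y ∈ I, writing x' = 2b - x and y' = 2b - y, we have G(x,y) + G(x',y) ≤ G(x,y') + G(x',y'). -/
open Real MeasureTheory Set

noncomputable def G (x y : ℝ) : ℝ := -(1 / (2 * π)) * x * y - (1 / 2) * |x - y| + π / 2

theorem G_karamata_right (b : ℝ) (hb : b ∈ Ioo 0 π)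
    (x y : ℝ) (hx : x ∈ Icc b π) (hy : y ∈ Icc b π) :
    G x y + G (2 * b - x) y ≤ G x (2 * b - y) + G (2 * b - x) (2 * b - y) := by
  obtain ⟨hb0, hbπ⟩ := hb
  have hπ : (0:ℝ) < π := Real.pi_pos
  unfold G
  have h1 : |x - (2 * b - y)| = |2 * b - x - y| := by
    rw [show x - (2 * b - y) = -(2 * b - x - y) by ring, abs_neg]
  have h2 : |2 * b - x - (2 * b - y)| = |x - y| := by
    rw [show 2 * b - x - (2 * b - y) = -(x - y) by ring, abs_neg]
  rw [h1, h2]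
  have hc : (0:ℝ) < 1 / (2 * π) := by positivity
  have hby : 0 ≤ b * (y - b) := mul_nonneg hb0.le (by linarith [hy.1])
  nlinarith [mul_nonneg hc.le hby]
end

section
/- Let G(x,y) = -(1/(2π))xy - (1/2)|x-y| + π/2, let b ∈ (0,π), and let x, y ∈ [b,π] with x' = 2b-x, y' = 2b-y. Then G(x,y) + G(x,y') ≤ G(x',y) + G(x',y'). -/
open Real MeasureTheory Set

theorem G_karamata_left (b : ℝ) (hb : b ∈ Ioo 0 π)
    (x y : ℝ) (hx : x ∈ Icc b π) (hy : y ∈ Icc b π) :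
    G x y + G x (2 * b - y) ≤ G (2 * b - x) y + G (2 * b - x) (2 * b - y) := by
  obtain ⟨hb0, hbπ⟩ := hb
  have hπ := Real.pi_pos
  unfold G
  have h1 : |x - (2 * b - y)| = |2 * b - x - y| := by
    rw [abs_sub_comm]; ring_nf
  have h2 : |2 * b - x - (2 * b - y)| = |x - y| := by
    rw [abs_sub_comm]; ring_nf
  rw [h1, h2]
  have key : -(1 / (2 * π)) * (2 * b - x) * y + -(1 / (2 * π)) * (2 * b - x) * (2 * b - y)
      - (-(1 / (2 * π)) * x * y + -(1 / (2 * π)) * x * (2 * b - y))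
      = 4 * (b * (x - b)) / (2 * π) := by
    field_simp
    ring
  have hnn : 0 ≤ 4 * (b * (x - b)) / (2 * π) := by
    apply div_nonneg
    · nlinarith [hx.1]
    · linarith
  linarith
end

section
/- Let σ be a finite nonzero Borel measure on (-π,π) and suppose σ is not a point mass at 0 (i.e., there is ε₁ > 0 with σ((-π,π) \ (-ε₁,ε₁)) > 0). Then for every x₀ ∈ (-π,π), ∫ G(x₀,y) dσ(y) < G(0,0)·σ((-π,π)) = (π/2)·σ((-π,π)). -/
open Real MeasureTheory Set

lemma key_nonneg (x y : ℝ) (hx1 : -π < x) (hx2 : x < π) (hy1 : -π ≤ y) (hy2 : y ≤ π) :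
    0 ≤ π * |x - y| + x * y := by
  rcases le_or_gt 0 x with hx | hx <;> rcases le_or_gt 0 y with hy | hy <;>
    rcases abs_cases (x - y) with ⟨h1, h2⟩ | ⟨h1, h2⟩ <;> rw [h1] <;> nlinarith [pi_pos]

lemma key_pos (x y : ℝ) (hx1 : -π < x) (hx2 : x < π) (hy1 : -π ≤ y) (hy2 : y ≤ π)
    (hy0 : y ≠ 0) : 0 < π * |x - y| + x * y := by
  rcases le_or_gt 0 x with hx | hx <;> rcases hy0.lt_or_gt with hy | hy <;>
    rcases abs_cases (x - y) with ⟨h1, h2⟩ | ⟨h1, h2⟩ <;> rw [h1] <;> nlinarith [pi_pos]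

lemma G_eq (x y : ℝ) : G x y = π / 2 - (π * |x - y| + x * y) / (2 * π) := by
  have hπ : π ≠ 0 := pi_ne_zero
  unfold G
  field_simp
  ring

theorem u_sigma_strict (σ : Measure ℝ) [IsFiniteMeasure σ]
    (hsupp : σ (Ioo (-π) π)ᶜ = 0) (hσ : 0 < σ (Ioo (-π) π))
    (ε₁ : ℝ) (hε₁ : 0 < ε₁) (hmass : 0 < σ (Ioo (-π) π \ Ioo (-ε₁) ε₁)) :
    ∀ x₀ ∈ Ioo (-π) π,
      (∫ y in Ioo (-π) π, G x₀ y ∂σ) < (π / 2) * (σ (Ioo (-π) π)).toReal := by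
  intro x₀ hx₀
  obtain ⟨hx1, hx2⟩ := hx₀
  -- ε₁ < π, otherwise the set S is empty
  have hεπ : ε₁ ≤ π := by
    by_contra h
    push_neg at h
    have : Ioo (-π) π \ Ioo (-ε₁) ε₁ = ∅ := by
      apply diff_eq_empty.2
      exact Ioo_subset_Ioo (by linarith) (by linarith)
    rw [this] at hmass
    simp at hmass
  set S := Ioo (-π) π \ Ioo (-ε₁) ε₁ with hS
  set T := Ioo (-π) π ∩ Ioo (-ε₁) ε₁ with hT
  -- compact set containing S
  set K := Icc (-π) π \ Ioo (-ε₁) ε₁ with hKdef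
  have hKcomp : IsCompact K := isCompact_Icc.diff isOpen_Ioo
  have hKne : K.Nonempty := ⟨π, ⟨⟨by linarith [pi_pos], le_refl π⟩, by
    simp only [mem_Ioo, not_and, not_lt]
    intro _; exact hεπ⟩⟩
  have hgcont : Continuous fun y => (π * |x₀ - y| + x₀ * y) / (2 * π) := by
    fun_prop
  obtain ⟨y₀, hy₀K, hmin⟩ := hKcomp.exists_isMinOn hKne hgcont.continuousOn
  set c := (π * |x₀ - y₀| + x₀ * y₀) / (2 * π) with hc
  have hy₀ne : y₀ ≠ 0 := by
    intro h
    rcases hy₀K with ⟨_, hnot⟩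
    exact hnot (by simp [h, hε₁, neg_lt_zero])
  have hcpos : 0 < c := by
    apply div_pos _ (by linarith [pi_pos])
    exact key_pos x₀ y₀ hx1 hx2 hy₀K.1.1 hy₀K.1.2 hy₀ne
  -- integrability
  have hGcont : Continuous fun y => G x₀ y := by
    unfold G; fun_prop
  have hint : IntegrableOn (fun y => G x₀ y) (Icc (-π) π) σ :=
    hGcont.continuousOn.integrableOn_compact isCompact_Icc
  have hintS : IntegrableOn (fun y => G x₀ y) S σ :=
    hint.mono_set (by intro y hy; exact ⟨hy.1.1.le, hy.1.2.le⟩)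
  have hintT : IntegrableOn (fun y => G x₀ y) T σ :=
    hint.mono_set (by intro y hy; exact ⟨hy.1.1.le, hy.1.2.le⟩)
  have hmeasS : MeasurableSet S := measurableSet_Ioo.diff measurableSet_Ioo
  have hmeasT : MeasurableSet T := measurableSet_Ioo.inter measurableSet_Ioo
  have hSfin : σ S ≠ ⊤ := measure_ne_top σ S
  have hTfin : σ T ≠ ⊤ := measure_ne_top σ T
  -- split integral
  have hsplit : (∫ y in Ioo (-π) π, G x₀ y ∂σ)
      = (∫ y in S, G x₀ y ∂σ) + (∫ y in T, G x₀ y ∂σ) := by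
    rw [← setIntegral_union Set.disjoint_sdiff_inter hmeasT hintS hintT,
      diff_union_inter]
  -- bounds on each piece
  have hboundS : (∫ y in S, G x₀ y ∂σ) ≤ (π / 2 - c) * (σ S).toReal := by
    calc (∫ y in S, G x₀ y ∂σ) ≤ ∫ _ in S, (π / 2 - c) ∂σ := by
          apply setIntegral_mono_on hintS (integrableOn_const hSfin) hmeasS
          intro y hy
          rw [G_eq]
          have hyK : y ∈ K := ⟨⟨hy.1.1.le, hy.1.2.le⟩, hy.2⟩
          have hle := hmin hyK
          simp only [mem_setOf_eq] at hle
          simp only [hc]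
          linarith
      _ = (π / 2 - c) * (σ S).toReal := by simp [mul_comm, measureReal_def]
  have hboundT : (∫ y in T, G x₀ y ∂σ) ≤ (π / 2) * (σ T).toReal := by
    calc (∫ y in T, G x₀ y ∂σ) ≤ ∫ _ in T, (π / 2) ∂σ := by
          apply setIntegral_mono_on hintT (integrableOn_const hTfin) hmeasT
          intro y hy
          rw [G_eq]
          have h0 : 0 ≤ (π * |x₀ - y| + x₀ * y) / (2 * π) :=
            div_nonneg (key_nonneg x₀ y hx1 hx2 hy.1.1.le hy.1.2.le) (by linarith [pi_pos])
          linarith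
      _ = (π / 2) * (σ T).toReal := by simp [mul_comm, measureReal_def]
  -- measure additivity
  have hadd : (σ (Ioo (-π) π)).toReal = (σ S).toReal + (σ T).toReal := by
    rw [← ENNReal.toReal_add hSfin hTfin]
    congr 1
    rw [← measure_union Set.disjoint_sdiff_inter hmeasT, diff_union_inter]
  have hSpos : 0 < (σ S).toReal := ENNReal.toReal_pos hmass.ne' hSfin
  rw [hsplit, hadd]
  nlinarith [hboundS, hboundT, hcpos, hSpos]
end
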